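/- For every $\phi \in L^\infty(\mathbb{T})$, the norm of $M(\phi) = T(\phi)+H(\phi)$ on $H^2(\mathbb{T})$ satisfies $\|\phi\|_{L^\infty} \le \|M(\phi)\| \le 2\|\phi\|_{L^\infty}$. -/

import Mathlib

open MeasureTheory Complex Real
noncomputable section
namespace TH

abbrev Tp : ℝ := 2 * Real.pi
instance : Fact (0 < Tp) := ⟨by positivity⟩
abbrev 𝕋 := AddCircle Tp
abbrev μ : Measure 𝕋 := AddCircle.haarAddCircle
abbrev L2 := Lp ℂ 2 μ

open scoped Classical in
/-- Multiplication operator by `φ` (defined to be `0` if `φ` is not essentially bounded). -/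
def Lmul (φ : 𝕋 → ℂ) : L2 →L[ℂ] L2 :=
  if hφ : MemLp φ ⊤ μ then
    LinearMap.mkContinuous
      { toFun := fun f => ((Lp.memLp f).smul (p := ⊤) hφ).toLp (φ • ⇑f)
        map_add' := fun f g => by
          rw [← MemLp.toLp_add]
          exact MemLp.toLp_congr _ _ (by
            filter_upwards [Lp.coeFn_add f g] with x hx
            simp only [Pi.smul_apply, smul_eq_mul, Pi.mul_apply, hx, Pi.add_apply, mul_add])
        map_smul' := fun c f => by
          rw [RingHom.id_apply, ← MemLp.toLp_const_smul]
          exact MemLp.toLp_congr ((Lp.memLp (c • f)).smul (p := ⊤) hφ)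
            (((Lp.memLp f).smul (p := ⊤) hφ).const_smul c) (by
            filter_upwards [Lp.coeFn_smul c f] with x hx
            simp only [Pi.smul_apply, smul_eq_mul, Pi.mul_apply, hx]
            ring) }
      (eLpNorm φ ⊤ μ).toReal
      (fun f => by
        simp only [LinearMap.coe_mk, AddHom.coe_mk]
        rw [Lp.norm_toLp, Lp.norm_def, ← ENNReal.toReal_mul]
        refine ENNReal.toReal_mono ?_ ?_
        · exact ENNReal.mul_ne_top hφ.eLpNorm_ne_top (Lp.eLpNorm_ne_top f)
        · exact eLpNorm_smul_le_eLpNorm_top_mul_eLpNorm 2 (Lp.aestronglyMeasurable f) φ)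
  else 0

/-- Composition with `x ↦ -x` on `L²`. -/
def Cneg : L2 → L2 :=
  Lp.compMeasurePreserving (fun x : 𝕋 => -x) (Measure.measurePreserving_neg μ)

/-- The flip operator `J : f(t) ↦ t⁻¹ f(t⁻¹)`. -/
def Jop : L2 →L[ℂ] L2 :=
  { toFun := fun f => Lmul (fun x => fourier (-1) x) (Cneg f)
    map_add' := fun f g => by
      show Lmul _ (Cneg (f + g)) = Lmul _ (Cneg f) + Lmul _ (Cneg g)
      unfold Cneg
      rw [map_add, map_add]
    map_smul' := fun c f => by
      show Lmul _ (Cneg (c • f)) = c • Lmul _ (Cneg f)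
      rw [← map_smul (Lmul fun x => fourier (-1) x)]
      congr 1
      apply Lp.ext
      unfold Cneg
      filter_upwards [Lp.coeFn_compMeasurePreserving (c • f) (Measure.measurePreserving_neg μ),
        Lp.coeFn_smul c (Lp.compMeasurePreserving (fun x : 𝕋 => -x)
          (Measure.measurePreserving_neg μ) f),
        (Measure.measurePreserving_neg μ).quasiMeasurePreserving.ae_eq_comp (Lp.coeFn_smul c f),
        Lp.coeFn_compMeasurePreserving f (Measure.measurePreserving_neg μ)]
        with x hx1 hx2 hx3 hx4
      refine hx1.trans (hx3.trans ?_)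
      have h5 : ((c • (↑↑f : 𝕋 → ℂ)) ∘ Neg.neg) x = c • (↑↑f ∘ Neg.neg) x := rfl
      rw [h5, ← hx4]
      exact hx2.symm
    cont := by
      exact (Lmul _).continuous.comp
        (Lp.isometry_compMeasurePreserving (E := ℂ) (p := 2)
          (Measure.measurePreserving_neg μ)).continuous }

/-- The Hardy space `H²(𝕋)`: closed span of `{t^n : n ≥ 0}`. -/
def Hardy : Submodule ℂ L2 :=
  (Submodule.span ℂ (Set.range fun n : ℕ => (fourierLp 2 (n : ℤ) : L2))).topologicalClosure

instance : CompleteSpace Hardy :=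
  (Submodule.isClosed_topologicalClosure _).completeSpace_coe

/-- The Riesz projection, as an operator on `L²(𝕋)`. -/
def Pproj : L2 →L[ℂ] L2 := Hardy.subtypeL ∘L Hardy.orthogonalProjectionOnto

/-- The Toeplitz operator `T(φ) : f ↦ P(φ f)` on `H²`. -/
def Top (φ : 𝕋 → ℂ) : Hardy →L[ℂ] Hardy :=
  Hardy.orthogonalProjectionOnto ∘L Lmul φ ∘L Hardy.subtypeL

/-- The Hankel operator `H(φ) : f ↦ P(φ · Jf)` on `H²`. -/
def Hop (φ : 𝕋 → ℂ) : Hardy →L[ℂ] Hardy :=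
  Hardy.orthogonalProjectionOnto ∘L Lmul φ ∘L Jop ∘L Hardy.subtypeL

/-- The Toeplitz + Hankel operator `M(φ) = T(φ) + H(φ)`. -/
def Mop (φ : 𝕋 → ℂ) : Hardy →L[ℂ] Hardy := Top φ + Hop φ

/-- The flip `φ̃(t) = φ(t⁻¹)` of a function on the circle. -/
def flip (φ : 𝕋 → ℂ) : 𝕋 → ℂ := fun x => φ (-x)


-- ============ auxiliary lemmas ============
open scoped ENNReal NNReal

lemma Lmul_coeFn {φ : 𝕋 → ℂ} (hφ : MemLp φ ⊤ μ) (f : L2) :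
    ⇑(Lmul φ f) =ᵐ[μ] φ • ⇑f := by
  rw [Lmul, dif_pos hφ]
  exact ((Lp.memLp f).smul (p := ⊤) hφ).coeFn_toLp

lemma norm_Lmul_apply_le {φ : 𝕋 → ℂ} (hφ : MemLp φ ⊤ μ) (f : L2) :
    ‖Lmul φ f‖ ≤ ‖hφ.toLp φ‖ * ‖f‖ := by
  rw [Lp.norm_def, Lp.norm_toLp, Lp.norm_def,
    eLpNorm_congr_ae (Lmul_coeFn hφ f), ← ENNReal.toReal_mul]
  refine ENNReal.toReal_mono ?_ ?_
  · exact ENNReal.mul_ne_top hφ.eLpNorm_ne_top (Lp.eLpNorm_ne_top f)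
  · exact eLpNorm_smul_le_eLpNorm_top_mul_eLpNorm 2 (Lp.aestronglyMeasurable f) φ

lemma memLp_fourier (n : ℤ) : MemLp (fun x : 𝕋 => fourier n x) ⊤ μ := by
  refine memLp_top_of_bound ((fourier n).continuous.aestronglyMeasurable) 1 ?_
  filter_upwards with x
  simp [fourier_apply, Circle.norm_coe]

/-- The shift operator: multiplication by `fourier n`. -/
def shift (n : ℤ) : L2 →L[ℂ] L2 := Lmul (fun x => fourier n x)

lemma shift_coeFn (n : ℤ) (f : L2) :
    ⇑(shift n f) =ᵐ[μ] fun x => fourier n x * f x :=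
  Lmul_coeFn (memLp_fourier n) f

lemma norm_shift (n : ℤ) (f : L2) : ‖shift n f‖ = ‖f‖ := by
  rw [Lp.norm_def, Lp.norm_def, eLpNorm_congr_ae (shift_coeFn n f)]
  congr 1
  apply eLpNorm_congr_norm_ae
  filter_upwards with x
  simp [map_mul, fourier_apply, Circle.norm_coe]
lemma shift_fourierLp (n k : ℤ) : shift n (fourierLp 2 k) = fourierLp 2 (n + k) := by
  apply Lp.ext
  filter_upwards [shift_coeFn n (fourierLp 2 k), coeFn_fourierLp (T := Tp) 2 k,
    coeFn_fourierLp (T := Tp) 2 (n + k)] with x h1 h2 h3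
  rw [h1, h2, h3, fourier_add]

lemma shift_shift (m n : ℤ) (f : L2) : shift m (shift n f) = shift (m + n) f := by
  apply Lp.ext
  filter_upwards [shift_coeFn m (shift n f), shift_coeFn n f, shift_coeFn (m + n) f]
    with x h1 h2 h3
  rw [h1, h2, h3, fourier_add, mul_assoc]

lemma Lmul_shift {φ : 𝕋 → ℂ} (hφ : MemLp φ ⊤ μ) (n : ℤ) (f : L2) :
    Lmul φ (shift n f) = shift n (Lmul φ f) := by
  apply Lp.ext
  filter_upwards [Lmul_coeFn hφ (shift n f), shift_coeFn n f,
    shift_coeFn n (Lmul φ f), Lmul_coeFn hφ f] with x h1 h2 h3 h4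
  rw [h1, h3, h4]
  simp only [Pi.smul_apply, smul_eq_mul, Pi.mul_apply]
  rw [h2]
  ring
lemma Cneg_coeFn (f : L2) : ⇑(Cneg f) =ᵐ[μ] fun x => f (-x) :=
  Lp.coeFn_compMeasurePreserving f (Measure.measurePreserving_neg μ)

lemma norm_Cneg (f : L2) : ‖Cneg f‖ = ‖f‖ :=
  (Lp.isometry_compMeasurePreserving (E := ℂ) (p := 2)
    (Measure.measurePreserving_neg μ)).norm_map_of_map_zero (by
      simp [Cneg, map_zero]) f

lemma Cneg_shift (n : ℤ) (f : L2) : Cneg (shift n f) = shift (-n) (Cneg f) := by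
  apply Lp.ext
  have h2 := (Measure.measurePreserving_neg μ).quasiMeasurePreserving.ae_eq_comp
    (shift_coeFn n f)
  filter_upwards [Cneg_coeFn (shift n f), shift_coeFn (-n) (Cneg f), Cneg_coeFn f, h2]
    with x h1 h3 h4 h5
  simp only [Function.comp_apply] at h5
  rw [h1, h5, h3, h4]
  congr 1
  rw [fourier_apply, fourier_apply, smul_neg, neg_smul]
lemma Jop_eq (f : L2) : Jop f = shift (-1) (Cneg f) := rfl

lemma Jop_shift (n : ℤ) (f : L2) : Jop (shift n f) = shift (-1 - n) (Cneg f) := by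
  rw [Jop_eq, Cneg_shift, shift_shift]
  ring_nf

lemma norm_Jop (f : L2) : ‖Jop f‖ = ‖f‖ := by
  rw [Jop_eq, norm_shift, norm_Cneg]

lemma fourierLp_mem_Hardy {k : ℤ} (hk : 0 ≤ k) : (fourierLp 2 k : L2) ∈ Hardy := by
  apply Submodule.le_topologicalClosure
  apply Submodule.subset_span
  exact ⟨k.toNat, by simp [Int.toNat_of_nonneg hk]⟩

lemma fourierLp_mem_orth {k : ℤ} (hk : k < 0) : (fourierLp 2 k : L2) ∈ Hardyᗮ := by
  have horth := orthonormal_fourier (T := Tp)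
  have hK : (fourierLp 2 k : L2) ∈ (Submodule.span ℂ
      (Set.range fun n : ℕ => (fourierLp 2 (n : ℤ) : L2)))ᗮ := by
    rw [Submodule.mem_orthogonal]
    intro u hu
    induction hu using Submodule.span_induction with
    | mem x hx =>
      obtain ⟨n, rfl⟩ := hx
      have : (n : ℤ) ≠ k := by omega
      simpa [orthonormal_iff_ite.mp horth, this] using
        (orthonormal_iff_ite.mp horth (n : ℤ) k).trans (by simp [this])
    | zero => simp
    | add x y _ _ hx hy => rw [inner_add_left, hx, hy, add_zero]
    | smul c x _ hx => rw [inner_smul_left, hx, mul_zero]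
  -- orthogonal of span equals orthogonal of closure
  have he : Hardy = (Submodule.span ℂ
      (Set.range fun n : ℕ => (fourierLp 2 (n : ℤ) : L2)))ᗮᗮ :=
    (Submodule.orthogonal_orthogonal_eq_closure _).symm
  rw [he, Submodule.triorthogonal_eq_orthogonal]
  exact hK
lemma Pproj_apply (x : L2) : Pproj x = (Hardy.orthogonalProjectionOnto x : L2) := rfl

lemma Pproj_of_mem {x : L2} (hx : x ∈ Hardy) : Pproj x = x := by
  rw [Pproj_apply, ← Submodule.starProjection_apply, Submodule.starProjection_eq_self_iff.2 hx]

lemma Pproj_of_mem_orth {x : L2} (hx : x ∈ Hardyᗮ) : Pproj x = 0 := by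
  rw [Pproj_apply, Submodule.orthogonalProjectionOnto_apply_of_mem_orthogonal hx,
    Submodule.coe_zero]

lemma norm_Pproj_le (x : L2) : ‖Pproj x‖ ≤ ‖x‖ := by
  have h := Submodule.norm_sq_eq_add_norm_sq_projection x Hardy
  rw [Pproj_apply, Submodule.norm_coe]
  nlinarith [norm_nonneg (Hardy.orthogonalProjectionOnto x),
    norm_nonneg (Hardyᗮ.orthogonalProjectionOnto x), norm_nonneg x]

lemma norm_sub_Pproj_le (x : L2) : ‖x - Pproj x‖ ≤ ‖x‖ := by
  have h := Submodule.norm_sq_eq_add_norm_sq_projection x Hardy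
  have h2 : x - Pproj x = (Hardyᗮ.orthogonalProjectionOnto x : L2) := by
    rw [← Submodule.starProjection_apply, Submodule.starProjection_orthogonal_val, Pproj_apply,
      Submodule.starProjection_apply]
  rw [h2, Submodule.norm_coe]
  nlinarith [norm_nonneg (Hardy.orthogonalProjectionOnto x),
    norm_nonneg (Hardyᗮ.orthogonalProjectionOnto x), norm_nonneg x]

/-- The dense span of all Fourier monomials. -/
def Wspan : Submodule ℂ L2 := Submodule.span ℂ (Set.range fun n : ℤ => (fourierLp 2 n : L2))

lemma Wspan_dense : Dense (Wspan : Set L2) := by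
  rw [Submodule.dense_iff_topologicalClosure_eq_top]
  exact span_fourierLp_closure_eq_top (T := Tp) (p := 2) (by norm_num)
lemma shift_mem_Hardy_eventually {f : L2} (hf : f ∈ Wspan) :
    ∃ N : ℕ, ∀ n : ℕ, N ≤ n → shift (n : ℤ) f ∈ Hardy := by
  induction hf using Submodule.span_induction with
  | mem x hx =>
    obtain ⟨k, rfl⟩ := hx
    exact ⟨k.natAbs, fun n hn => by
      rw [shift_fourierLp]
      exact fourierLp_mem_Hardy (by omega)⟩
  | zero => exact ⟨0, fun n _ => by rw [map_zero]; exact Hardy.zero_mem⟩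
  | add x y _ _ hx hy =>
    obtain ⟨N₁, h₁⟩ := hx; obtain ⟨N₂, h₂⟩ := hy
    exact ⟨max N₁ N₂, fun n hn => by
      rw [map_add]
      exact Hardy.add_mem (h₁ n (le_trans (le_max_left _ _) hn))
        (h₂ n (le_trans (le_max_right _ _) hn))⟩
  | smul c x _ hx =>
    obtain ⟨N, h⟩ := hx
    exact ⟨N, fun n hn => by rw [_root_.map_smul]; exact Hardy.smul_mem c (h n hn)⟩

lemma shift_mem_orth_eventually {f : L2} (hf : f ∈ Wspan) :
    ∃ N : ℕ, ∀ n : ℕ, N ≤ n → shift (-(n : ℤ)) f ∈ Hardyᗮ := by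
  induction hf using Submodule.span_induction with
  | mem x hx =>
    obtain ⟨k, rfl⟩ := hx
    exact ⟨k.natAbs + 1, fun n hn => by
      rw [shift_fourierLp]
      exact fourierLp_mem_orth (by omega)⟩
  | zero => exact ⟨0, fun n _ => by rw [map_zero]; exact Hardyᗮ.zero_mem⟩
  | add x y _ _ hx hy =>
    obtain ⟨N₁, h₁⟩ := hx; obtain ⟨N₂, h₂⟩ := hy
    exact ⟨max N₁ N₂, fun n hn => by
      rw [map_add]
      exact Hardyᗮ.add_mem (h₁ n (le_trans (le_max_left _ _) hn))
        (h₂ n (le_trans (le_max_right _ _) hn))⟩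
  | smul c x _ hx =>
    obtain ⟨N, h⟩ := hx
    exact ⟨N, fun n hn => by rw [_root_.map_smul]; exact Hardyᗮ.smul_mem c (h n hn)⟩
lemma sub_Pproj_shift_small (h : L2) {ε : ℝ} (hε : 0 < ε) :
    ∃ N : ℕ, ∀ n : ℕ, N ≤ n → ‖shift (n : ℤ) h - Pproj (shift (n : ℤ) h)‖ ≤ ε := by
  obtain ⟨f, hfW, hdist⟩ := Wspan_dense.exists_dist_lt h hε
  obtain ⟨N, hN⟩ := shift_mem_Hardy_eventually hfW
  refine ⟨N, fun n hn => ?_⟩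
  have hPf : Pproj (shift (n : ℤ) f) = shift (n : ℤ) f := Pproj_of_mem (hN n hn)
  have key : shift (n : ℤ) h - Pproj (shift (n : ℤ) h)
      = shift (n : ℤ) (h - f) - Pproj (shift (n : ℤ) (h - f)) := by
    rw [map_sub, map_sub, hPf]
    abel
  rw [key]
  calc ‖shift (n : ℤ) (h - f) - Pproj (shift (n : ℤ) (h - f))‖
      ≤ ‖shift (n : ℤ) (h - f)‖ := norm_sub_Pproj_le _
    _ = ‖h - f‖ := norm_shift _ _
    _ ≤ ε := by rw [← dist_eq_norm]; exact hdist.le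

lemma Pproj_shift_neg_small (h : L2) {ε : ℝ} (hε : 0 < ε) :
    ∃ N : ℕ, ∀ n : ℕ, N ≤ n → ‖Pproj (shift (-(n : ℤ)) h)‖ ≤ ε := by
  obtain ⟨f, hfW, hdist⟩ := Wspan_dense.exists_dist_lt h hε
  obtain ⟨N, hN⟩ := shift_mem_orth_eventually hfW
  refine ⟨N, fun n hn => ?_⟩
  have hPf : Pproj (shift (-(n : ℤ)) f) = 0 := Pproj_of_mem_orth (hN n hn)
  have key : Pproj (shift (-(n : ℤ)) h) = Pproj (shift (-(n : ℤ)) (h - f)) := by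
    rw [map_sub, map_sub, hPf, sub_zero]
  rw [key]
  calc ‖Pproj (shift (-(n : ℤ)) (h - f))‖
      ≤ ‖shift (-(n : ℤ)) (h - f)‖ := norm_Pproj_le _
    _ = ‖h - f‖ := norm_shift _ _
    _ ≤ ε := by rw [← dist_eq_norm]; exact hdist.le
lemma Mop_coe (φ : 𝕋 → ℂ) (x : Hardy) :
    ((Mop φ x : Hardy) : L2) = Pproj (Lmul φ (x : L2)) + Pproj (Lmul φ (Jop (x : L2))) := by
  rfl

set_option maxHeartbeats 1000000 in
lemma key_lower_span {φ : 𝕋 → ℂ} (hφ : MemLp φ ⊤ μ) (f : L2) (hfW : f ∈ Wspan) :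
    ‖Lmul φ f‖ ≤ ‖Mop φ‖ * ‖f‖ := by
  refine le_of_forall_pos_le_add (fun ε hε => ?_)
  have hε2 : 0 < ε / 2 := by linarith
  obtain ⟨N₀, hN₀⟩ := shift_mem_Hardy_eventually hfW
  obtain ⟨N₁, hN₁⟩ := sub_Pproj_shift_small (Lmul φ f) hε2
  obtain ⟨N₂, hN₂⟩ := Pproj_shift_neg_small (Lmul φ (Cneg f)) hε2
  obtain ⟨n, hn0, hn1, hn2⟩ : ∃ n : ℕ, N₀ ≤ n ∧ N₁ ≤ n ∧ N₂ ≤ n + 1 :=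
    ⟨N₀ + N₁ + N₂, by omega, by omega, by omega⟩
  have hmem : shift (n : ℤ) f ∈ Hardy := hN₀ n hn0
  have ha : Lmul φ (shift (n : ℤ) f) = shift (n : ℤ) (Lmul φ f) := Lmul_shift hφ n f
  have hb : Lmul φ (Jop (shift (n : ℤ) f)) = shift (-((n : ℤ) + 1)) (Lmul φ (Cneg f)) := by
    rw [Jop_shift, Lmul_shift hφ]
    have : (-1 - (n : ℤ)) = -((n : ℤ) + 1) := by ring
    rw [this]
  have e2 : ‖shift (n : ℤ) (Lmul φ f)‖
      ≤ ‖Pproj (shift (n : ℤ) (Lmul φ f))‖ + ε / 2 := by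
    have h3 := hN₁ n hn1
    have h4 := norm_add_le (Pproj (shift (n : ℤ) (Lmul φ f)))
      (shift (n : ℤ) (Lmul φ f) - Pproj (shift (n : ℤ) (Lmul φ f)))
    simp only [add_sub_cancel] at h4
    linarith
  have h5 : ‖Pproj (Lmul φ (Jop (shift (n : ℤ) f)))‖ ≤ ε / 2 := by
    rw [hb]
    have := hN₂ (n + 1) hn2
    have hcast : ((n + 1 : ℕ) : ℤ) = (n : ℤ) + 1 := by omega
    rwa [hcast] at this
  have e3 : ‖Pproj (Lmul φ (shift (n : ℤ) f))‖
      ≤ ‖Pproj (Lmul φ (shift (n : ℤ) f)) + Pproj (Lmul φ (Jop (shift (n : ℤ) f)))‖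
        + ε / 2 := by
    have h6 := norm_sub_le
      (Pproj (Lmul φ (shift (n : ℤ) f)) + Pproj (Lmul φ (Jop (shift (n : ℤ) f))))
      (Pproj (Lmul φ (Jop (shift (n : ℤ) f))))
    simp only [add_sub_cancel_right] at h6
    linarith
  have e4 : ‖Pproj (Lmul φ (shift (n : ℤ) f)) + Pproj (Lmul φ (Jop (shift (n : ℤ) f)))‖
      ≤ ‖Mop φ‖ * ‖f‖ := by
    have hM := (Mop φ).le_opNorm (⟨shift (n : ℤ) f, hmem⟩ : Hardy)
    rw [← Submodule.norm_coe (Mop φ ⟨shift (n : ℤ) f, hmem⟩), Mop_coe] at hM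
    have hxn : ‖(⟨shift (n : ℤ) f, hmem⟩ : Hardy)‖ = ‖f‖ := by
      rw [show ‖(⟨shift (n : ℤ) f, hmem⟩ : Hardy)‖ = ‖shift (n : ℤ) f‖ from rfl, norm_shift]
    rw [hxn] at hM
    exact hM
  have e1 : ‖Lmul φ f‖ = ‖Lmul φ (shift (n : ℤ) f)‖ := by rw [ha, norm_shift]
  rw [← ha] at e2
  linarith [e1, e2, e3, e4]
lemma key_lower {φ : 𝕋 → ℂ} (hφ : MemLp φ ⊤ μ) (f : L2) :
    ‖Lmul φ f‖ ≤ ‖Mop φ‖ * ‖f‖ := by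
  have hclosed : IsClosed {f : L2 | ‖Lmul φ f‖ ≤ ‖Mop φ‖ * ‖f‖} :=
    isClosed_le ((Lmul φ).continuous.norm) (continuous_const.mul continuous_norm)
  have hsub : (Wspan : Set L2) ⊆ {f : L2 | ‖Lmul φ f‖ ≤ ‖Mop φ‖ * ‖f‖} :=
    fun f hf => key_lower_span hφ f hf
  have hall := hclosed.closure_subset_iff.mpr hsub
  rw [Wspan_dense.closure_eq] at hall
  exact hall (Set.mem_univ f)
set_option maxHeartbeats 1000000 in
lemma norm_toLp_le_of_bound {φ : 𝕋 → ℂ} (hφ : MemLp φ ⊤ μ) {C : ℝ} (hC : 0 ≤ C)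
    (h : ∀ f : L2, ‖Lmul φ f‖ ≤ C * ‖f‖) : ‖hφ.toLp φ‖ ≤ C := by
  by_contra hlt
  push_neg at hlt
  set K := ‖hφ.toLp φ‖ with hK
  set c := (C + K) / 2 with hc
  have hCc : C < c := by simp only [hc]; linarith
  have hcK : c < K := by simp only [hc]; linarith
  have hc0 : 0 ≤ c := by linarith
  -- the set where |φ| > c has positive measure
  set ψ := hφ.aestronglyMeasurable.mk φ with hψ
  have hψm : StronglyMeasurable ψ := hφ.aestronglyMeasurable.stronglyMeasurable_mk
  have hae : φ =ᵐ[μ] ψ := hφ.aestronglyMeasurable.ae_eq_mk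
  set s : Set 𝕋 := {x | c < ‖ψ x‖} with hs_def
  have hs : MeasurableSet s := measurableSet_lt measurable_const hψm.measurable.norm
  have hμs : μ s ≠ 0 := by
    intro h0
    have hbound : ∀ᵐ x ∂μ, ‖φ x‖ ≤ c := by
      have h1 : ∀ᵐ x ∂μ, x ∉ s := by
        rw [ae_iff]
        simpa using h0
      filter_upwards [h1, hae] with x hx1 hx2
      rw [hx2]
      simpa [hs_def] using hx1
    have h2 : eLpNorm φ ⊤ μ ≤ ENNReal.ofReal c := by
      rw [eLpNorm_exponent_top]
      exact eLpNormEssSup_le_of_ae_bound hbound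
    have h3 : K ≤ c := by
      rw [hK, Lp.norm_toLp]
      calc (eLpNorm φ ⊤ μ).toReal ≤ (ENNReal.ofReal c).toReal :=
        ENNReal.toReal_mono ENNReal.ofReal_ne_top h2
        _ = c := ENNReal.toReal_ofReal hc0
    linarith
  have hμstop : μ s ≠ ⊤ := measure_ne_top μ s
  -- the indicator test function
  have hmem : MemLp (s.indicator fun _ => (1 : ℂ)) 2 μ :=
    memLp_indicator_const 2 hs 1 (Or.inr hμstop)
  set f : L2 := hmem.toLp _ with hf_def
  have hnf : ‖f‖ = (μ s ^ (1 / 2 : ℝ)).toReal := by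
    rw [hf_def, Lp.norm_toLp, eLpNorm_indicator_const hs two_ne_zero ENNReal.ofNat_ne_top]
    simp [ENNReal.toReal_ofNat]
  -- lower bound for ‖Lmul φ f‖
  have hcoe : ⇑(Lmul φ f) =ᵐ[μ] fun x => φ x * s.indicator (fun _ => (1 : ℂ)) x := by
    filter_upwards [Lmul_coeFn hφ f, hmem.coeFn_toLp] with x h1 h2
    rw [← hf_def] at h2
    rw [h1]
    simp only [Pi.smul_apply, smul_eq_mul, Pi.mul_apply]
    rw [h2]
  have hlow : ENNReal.ofReal c * μ s ^ (1 / 2 : ℝ) ≤ eLpNorm ⇑(Lmul φ f) 2 μ := by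
    rw [eLpNorm_congr_ae hcoe,
      eLpNorm_eq_lintegral_rpow_enorm_toReal two_ne_zero ENNReal.ofNat_ne_top]
    have htoReal : (2 : ℝ≥0∞).toReal = (2 : ℝ) := by simp
    rw [htoReal]
    have hpt : ∀ᵐ x ∂μ, s.indicator (fun _ => (ENNReal.ofReal c) ^ (2 : ℝ)) x
        ≤ (‖φ x * s.indicator (fun _ => (1 : ℂ)) x‖₊ : ℝ≥0∞) ^ (2 : ℝ) := by
      filter_upwards [hae] with x hx
      by_cases hxs : x ∈ s
      · rw [Set.indicator_of_mem hxs, Set.indicator_of_mem hxs, mul_one]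
        refine ENNReal.rpow_le_rpow ?_ (by norm_num)
        rw [hx]
        have : c < ‖ψ x‖ := hxs
        calc ENNReal.ofReal c ≤ ENNReal.ofReal ‖ψ x‖ := ENNReal.ofReal_le_ofReal this.le
          _ = (‖ψ x‖₊ : ℝ≥0∞) := ofReal_norm_eq_enorm _
      · rw [Set.indicator_of_notMem hxs]
        exact zero_le
    have hint : ((ENNReal.ofReal c) ^ (2 : ℝ)) * μ s
        ≤ ∫⁻ x, (‖φ x * s.indicator (fun _ => (1 : ℂ)) x‖₊ : ℝ≥0∞) ^ (2 : ℝ) ∂μ := by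
      calc ((ENNReal.ofReal c) ^ (2 : ℝ)) * μ s
          = ∫⁻ x, s.indicator (fun _ => (ENNReal.ofReal c) ^ (2 : ℝ)) x ∂μ := by
            rw [lintegral_indicator hs, setLIntegral_const]
        _ ≤ _ := lintegral_mono_ae hpt
    calc ENNReal.ofReal c * μ s ^ (1 / 2 : ℝ)
        = (((ENNReal.ofReal c) ^ (2 : ℝ)) * μ s) ^ (1 / 2 : ℝ) := by
          rw [ENNReal.mul_rpow_of_nonneg _ _ (by norm_num : (0:ℝ) ≤ 1/2),
            ← ENNReal.rpow_mul]
          norm_num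
      _ ≤ _ := ENNReal.rpow_le_rpow hint (by norm_num)
  have hlow' : c * ‖f‖ ≤ ‖Lmul φ f‖ := by
    rw [hnf, Lp.norm_def]
    calc c * (μ s ^ (1 / 2 : ℝ)).toReal
        = (ENNReal.ofReal c * μ s ^ (1 / 2 : ℝ)).toReal := by
          rw [ENNReal.toReal_mul, ENNReal.toReal_ofReal hc0]
      _ ≤ (eLpNorm ⇑(Lmul φ f) 2 μ).toReal :=
          ENNReal.toReal_mono (Lp.eLpNorm_ne_top _) hlow
  have hfpos : 0 < ‖f‖ := by
    rw [hnf]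
    have : μ s ^ (1 / 2 : ℝ) ≠ 0 := by
      simp [ENNReal.rpow_eq_zero_iff, hμs, hμstop]
    have htop : μ s ^ (1 / 2 : ℝ) ≠ ⊤ := by
      simp [ENNReal.rpow_eq_top_iff, hμs, hμstop]
    exact ENNReal.toReal_pos this htop
  have := h f
  nlinarith
set_option maxHeartbeats 1000000 in
lemma key_upper {φ : 𝕋 → ℂ} (hφ : MemLp φ ⊤ μ) : ‖Mop φ‖ ≤ 2 * ‖hφ.toLp φ‖ := by
  refine ContinuousLinearMap.opNorm_le_bound _ (by positivity) (fun x => ?_)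
  rw [← Submodule.norm_coe (Mop φ x), Mop_coe]
  calc ‖Pproj (Lmul φ (x : L2)) + Pproj (Lmul φ (Jop (x : L2)))‖
      ≤ ‖Pproj (Lmul φ (x : L2))‖ + ‖Pproj (Lmul φ (Jop (x : L2)))‖ := norm_add_le _ _
    _ ≤ ‖Lmul φ (x : L2)‖ + ‖Lmul φ (Jop (x : L2))‖ :=
        add_le_add (norm_Pproj_le _) (norm_Pproj_le _)
    _ ≤ ‖hφ.toLp φ‖ * ‖(x : L2)‖ + ‖hφ.toLp φ‖ * ‖Jop (x : L2)‖ :=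
        add_le_add (norm_Lmul_apply_le hφ _) (norm_Lmul_apply_le hφ _)
    _ = 2 * ‖hφ.toLp φ‖ * ‖x‖ := by
        rw [norm_Jop, Submodule.norm_coe]
        ring

set_option maxHeartbeats 1000000 in
/-- `‖φ‖_∞ ≤ ‖M(φ)‖ ≤ 2 ‖φ‖_∞`. -/
theorem stmt_6 (φ : 𝕋 → ℂ) (hφ : MemLp φ ⊤ μ) :
    ‖hφ.toLp φ‖ ≤ ‖Mop φ‖ ∧ ‖Mop φ‖ ≤ 2 * ‖hφ.toLp φ‖ := by
  constructor
  · exact norm_toLp_le_of_bound hφ (norm_nonneg (Mop φ)) (key_lower hφ)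
  · exact key_upper hφ

end TH
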